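/- Let f : 𝒬₁ → ℤ be an integral flow with ∂f = χ_{v'} − χ_v for two distinct vertices v, v' of 𝒬 (where χ_v denotes the indicator function of the vertex v). Then there exists a path p in 𝒬 from v to v' such that f(a) > 0 for every arrow a in the positive part p⁺ and f(a) < 0 for every arrow a in the negative part p⁻. -/

import Mathlib

/-!
Common framework: finite quivers, flows, boundaries, cycles, closures, the projection π,
and the solution polyhedra of the (generalised) transportation problem, following
Sardo Infirri, "Orbifold Singularities and McKay Flows".
-/

open Finset

/-- A (finite) quiver given by tail and head maps on a type of arrows. -/
structure FQuiver (V A : Type) where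
  t : A → V
  h : A → V

namespace FQuiver

variable {V A : Type}

/-- The boundary (net contribution) of a flow `f : A → R` at each vertex. -/
def boundary [Fintype A] [DecidableEq V] (Q : FQuiver V A) {R : Type} [AddCommGroup R]
    (f : A → R) : V → R := fun v =>
  (∑ a ∈ univ.filter (fun a => Q.h a = v), f a) -
  (∑ a ∈ univ.filter (fun a => Q.t a = v), f a)

/-- Source of a step (an arrow together with a direction of traversal). -/
def stepSrc (Q : FQuiver V A) (s : A × Bool) : V := if s.2 then Q.t s.1 else Q.h s.1

/-- Destination of a step. -/
def stepDst (Q : FQuiver V A) (s : A × Bool) : V := if s.2 then Q.h s.1 else Q.t s.1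

/-- A walk (path) from `v` to `v'` in the underlying undirected graph of the quiver:
a nonempty list of steps which compose, with consecutive arrows distinct. -/
def IsWalk (Q : FQuiver V A) (p : List (A × Bool)) (v v' : V) : Prop :=
  p ≠ [] ∧
  p.head?.map Q.stepSrc = some v ∧
  p.getLast?.map Q.stepDst = some v' ∧
  List.Chain' (fun s s' => Q.stepDst s = Q.stepSrc s') p ∧
  List.Chain' (fun s s' : A × Bool => s.1 ≠ s'.1) p

/-- A cycle: a closed walk. -/
def IsCycle (Q : FQuiver V A) (p : List (A × Bool)) : Prop := ∃ v, Q.IsWalk p v v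

end FQuiver

variable {V A : Type}

/-- The positive part of a walk/cycle: the arrows traversed in agreement with it. -/
def posArrows (p : List (A × Bool)) : Set A := {a | (a, true) ∈ p}

/-- The negative part of a walk/cycle: the arrows traversed against it. -/
def negArrows (p : List (A × Bool)) : Set A := {a | (a, false) ∈ p}

/-- The (integral) basic flow associated to a walk/cycle. -/
def basicFlowZ [DecidableEq A] (p : List (A × Bool)) : A → ℤ := fun a =>
  (p.count (a, true) : ℤ) - (p.count (a, false) : ℤ)

/-- The basic flow associated to a walk/cycle, as a real flow. -/
def basicFlow [DecidableEq A] (p : List (A × Bool)) : A → ℝ := fun a =>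
  (basicFlowZ p a : ℝ)

/-- The linear map induced by a typing map `π : A → Fin n` on flows. -/
def piMap [Fintype A] {n : ℕ} (π : A → Fin n) {R : Type} [AddCommMonoid R] (f : A → R) :
    Fin n → R := fun i => ∑ a ∈ univ.filter (fun a => π a = i), f a

/-- The support of a flow. -/
def fsupport (f : A → ℝ) : Set A := {a | f a ≠ 0}

/-- The polyhedron `F_ζ` of admissible (nonnegative) `ζ`-flows. -/
def Fpoly [Fintype A] [DecidableEq V] (Q : FQuiver V A) (ζ : V → ℝ) : Set (A → ℝ) :=
  {f | (∀ a, 0 ≤ f a) ∧ Q.boundary f = ζ}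

/-- A set of arrows contains a cycle. -/
def ContainsCycle (Q : FQuiver V A) (S : Set A) : Prop :=
  ∃ p : List (A × Bool), Q.IsCycle p ∧ ∀ s ∈ p, s.1 ∈ S

/-- A set of arrows is closed if, for every cycle of type zero, it contains the positive
part iff it contains the negative part. -/
def IsClosedConfig [Fintype A] [DecidableEq A] {n : ℕ} (Q : FQuiver V A) (π : A → Fin n)
    (T : Set A) : Prop :=
  ∀ p : List (A × Bool), Q.IsCycle p → piMap π (basicFlowZ p) = 0 →
    (posArrows p ⊆ T ↔ negArrows p ⊆ T)

/-- The closure `S̄` of a configuration: the smallest closed over-set. -/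
def confClosure [Fintype A] [DecidableEq A] {n : ℕ} (Q : FQuiver V A) (π : A → Fin n)
    (S : Set A) : Set A :=
  ⋂₀ {T | S ⊆ T ∧ IsClosedConfig Q π T}

/-- `Z₀(S)`: the space of flows with zero boundary vanishing outside `S`. -/
def Z0 [Fintype A] [DecidableEq V] (Q : FQuiver V A) (S : Set A) : Set (A → ℝ) :=
  {g | Q.boundary g = 0 ∧ ∀ a ∉ S, g a = 0}

/-- `F₀(S)`: the cone of flows with zero boundary which are nonnegative outside `S`. -/
def F0cone [Fintype A] [DecidableEq V] (Q : FQuiver V A) (S : Set A) : Set (A → ℝ) :=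
  {g | Q.boundary g = 0 ∧ ∀ a ∉ S, 0 ≤ g a}

/-- The rank of a configuration: the dimension of `span(π(Z₀(S̄)))`. -/
noncomputable def confRank [Fintype A] [DecidableEq A] [DecidableEq V] {n : ℕ} (Q : FQuiver V A)
    (π : A → Fin n) (S : Set A) : ℕ :=
  Module.finrank ℝ
    (Submodule.span ℝ ((fun g : A → ℝ => piMap π g) '' Z0 Q (confClosure Q π S)))

/-- The projected polyhedron `π(F_ζ) ⊆ ℝⁿ`. -/
def piImg [Fintype A] [DecidableEq V] {n : ℕ} (Q : FQuiver V A) (π : A → Fin n) (ζ : V → ℝ) :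
    Set (Fin n → ℝ) := (fun g : A → ℝ => piMap π g) '' Fpoly Q ζ

/-- The tangent cone `ℝ₊(P − x)` of a convex set at a point. -/
def polyTangentCone {E : Type} [AddCommGroup E] [Module ℝ E] (P : Set E) (x : E) : Set E :=
  {y | ∃ t : ℝ, 0 ≤ t ∧ ∃ p ∈ P, y = t • (p - x)}

/-- A face of a convex set: a convex extreme subset. -/
def IsFace {E : Type} [AddCommGroup E] [Module ℝ E] (P F : Set E) : Prop :=
  Convex ℝ F ∧ IsExtreme ℝ P F

/-- `Face_ζ(S)` computed from a flow `f`: `π(F_ζ) ∩ (π(f) + span(π(Z₀(S̄))))`. -/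
def faceOf [Fintype A] [DecidableEq A] [DecidableEq V] {n : ℕ} (Q : FQuiver V A)
    (π : A → Fin n) (ζ : V → ℝ) (S : Set A) (f : A → ℝ) : Set (Fin n → ℝ) :=
  piImg Q π ζ ∩
    {y | y - piMap π f ∈
      Submodule.span ℝ ((fun g : A → ℝ => piMap π g) '' Z0 Q (confClosure Q π S))}

/-- The McKay quiver of the cyclic action `1/r (w₁, …, w_n)`: vertices `ℤ/rℤ` and one
arrow `a_v^i : v → v − w_i` for each vertex `v` and each `i`. -/
def mckayQuiver (r n : ℕ) (w : Fin n → ZMod r) : FQuiver (ZMod r) (ZMod r × Fin n) where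
  t := fun a => a.1
  h := fun a => a.1 - w a.2

/-- The commutation flow `χ_v^i + χ_{v−w_i}^j − χ_v^j − χ_{v−w_j}^i`. -/
def commFlow (r n : ℕ) (w : Fin n → ZMod r) (v : ZMod r) (i j : Fin n) :
    ZMod r × Fin n → ℤ := fun a =>
  (if a = (v, i) then 1 else 0) + (if a = (v - w i, j) then 1 else 0)
    - (if a = (v, j) then 1 else 0) - (if a = (v - w j, i) then 1 else 0)

/-- `Λ²`: the subgroup of integral flows generated by the commutation flows. -/
def mckayLambda2 (r n : ℕ) (w : Fin n → ZMod r) : AddSubgroup (ZMod r × Fin n → ℤ) :=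
  AddSubgroup.closure {g | ∃ v i j, g = commFlow r n w v i j}

/-- If `f` is an integral flow with `∂f = χ_{v'} − χ_v` for distinct
vertices `v, v'`, then there is a path `p` from `v` to `v'` with `f > 0` on the positive
part `p⁺` and `f < 0` on the negative part `p⁻`. -/
theorem statement9 {V A : Type} [Fintype V] [Fintype A] [DecidableEq V] [DecidableEq A]
    (Q : FQuiver V A) (v v' : V) (hvv' : v ≠ v') (f : A → ℤ)
    (hf : Q.boundary f =
      fun u => (if u = v' then (1 : ℤ) else 0) - (if u = v then 1 else 0)) :
    ∃ p : List (A × Bool), Q.IsWalk p v v' ∧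
      (∀ a ∈ posArrows p, 0 < f a) ∧ ∀ a ∈ negArrows p, f a < 0 := by
  classical
  set Rel : V → V → Prop := fun u u' => ∃ a,
      (0 < f a ∧ Q.t a = u ∧ Q.h a = u') ∨ (f a < 0 ∧ Q.h a = u ∧ Q.t a = u') with hRel
  set R : Finset V := univ.filter (fun u => Relation.ReflTransGen Rel v u) with hR
  have hvR : v ∈ R := by
    simp only [hR, mem_filter, mem_univ, true_and]
    exact Relation.ReflTransGen.refl
  have hclosed : ∀ u ∈ R, ∀ u', Rel u u' → u' ∈ R := by
    intro u hu u' h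
    simp only [hR, mem_filter, mem_univ, true_and] at hu ⊢
    exact hu.tail h
  have hv'R : v' ∈ R := by
    by_contra hv'
    have hsum : ∑ u ∈ R, Q.boundary f u = -1 := by
      rw [hf]
      rw [Finset.sum_sub_distrib]
      rw [Finset.sum_ite_eq' R v' (fun _ => (1:ℤ)), Finset.sum_ite_eq' R v (fun _ => (1:ℤ))]
      simp [hvR, hv']
    have h1 : ∑ u ∈ R, Q.boundary f u
        = (∑ a ∈ univ.filter (fun a => Q.h a ∈ R), f a)
          - (∑ a ∈ univ.filter (fun a => Q.t a ∈ R), f a) := by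
      unfold FQuiver.boundary
      rw [Finset.sum_sub_distrib,
        Finset.sum_fiberwise_eq_sum_filter univ R Q.h f,
        Finset.sum_fiberwise_eq_sum_filter univ R Q.t f]
    have h2 : (0:ℤ) ≤ ∑ u ∈ R, Q.boundary f u := by
      rw [h1, Finset.sum_filter, Finset.sum_filter, ← Finset.sum_sub_distrib]
      apply Finset.sum_nonneg
      intro a _
      by_cases ht : Q.t a ∈ R <;> by_cases hh : Q.h a ∈ R <;> simp only [ht, hh,
        if_true, if_false, sub_self, sub_zero, zero_sub, le_refl, neg_nonneg]
      · -- t ∈ R, h ∉ R : show f a ≤ 0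
        by_contra hfa
        push_neg at hfa
        exact hh (hclosed _ ht _ ⟨a, Or.inl ⟨hfa, rfl, rfl⟩⟩)
      · -- h ∈ R, t ∉ R : show 0 ≤ f a
        by_contra hfa
        push_neg at hfa
        exact ht (hclosed _ hh _ ⟨a, Or.inr ⟨hfa, rfl, rfl⟩⟩)
    omega
  have hreach : Relation.ReflTransGen Rel v v' := by
    simpa [hR] using hv'R
  set Good : A × Bool → Prop := fun s => if s.2 then 0 < f s.1 else f s.1 < 0 with hGood
  have hne : ∀ s s' : A × Bool, Good s → Good s' → Q.stepSrc s' ≠ Q.stepDst s' →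
      Q.stepDst s = Q.stepSrc s' → s.1 ≠ s'.1 := by
    rintro ⟨a, b⟩ ⟨a', b'⟩ g g' nl hds heq
    simp only at heq
    subst heq
    simp only [hGood] at g g'
    simp only [FQuiver.stepSrc, FQuiver.stepDst] at nl hds
    cases b <;> cases b' <;> simp_all <;> omega
  have main : ∀ u, Relation.ReflTransGen Rel v u → v = u ∨
      ∃ p : List (A × Bool), p ≠ [] ∧ p.head?.map Q.stepSrc = some v ∧
        p.getLast?.map Q.stepDst = some u ∧
        List.Chain' (fun s s' => Q.stepDst s = Q.stepSrc s' ∧ s.1 ≠ s'.1) p ∧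
        ∀ s ∈ p, Good s := by
    intro u h
    induction h with
    | refl => exact Or.inl rfl
    | @tail b c h1 h2 ih =>
      by_cases hbc : b = c
      · subst hbc; exact ih
      obtain ⟨a, hcase⟩ := h2
      obtain ⟨s, hsrc, hdst, hgood⟩ : ∃ s : A × Bool,
          Q.stepSrc s = b ∧ Q.stepDst s = c ∧ Good s := by
        rcases hcase with ⟨hf', ht, hh⟩ | ⟨hf', hh, ht⟩
        · exact ⟨(a, true), by simpa [FQuiver.stepSrc] using ht,
            by simpa [FQuiver.stepDst] using hh, by simp [hGood, hf']⟩
        · exact ⟨(a, false), by simpa [FQuiver.stepSrc] using hh,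
            by simpa [FQuiver.stepDst] using ht, by simp [hGood, hf']⟩
      have hnl : Q.stepSrc s ≠ Q.stepDst s := by rw [hsrc, hdst]; exact hbc
      rcases ih with rfl | ⟨p, hne0, hhead, hlast, hchain, hg⟩
      · right
        refine ⟨[s], by simp, by simp [hsrc], by simp [hdst], List.isChain_singleton s, ?_⟩
        intro s' hs'
        simp only [List.mem_singleton] at hs'
        subst hs'; exact hgood
      · right
        obtain ⟨slast, hlmem, hldst⟩ : ∃ sl, p.getLast? = some sl ∧ Q.stepDst sl = b := by
          cases hpl : p.getLast? with
          | none => rw [hpl] at hlast; simp at hlast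
          | some sl => rw [hpl] at hlast; simp at hlast; exact ⟨sl, rfl, hlast⟩
        have hslastmem : slast ∈ p := by
          obtain ⟨hnn, heq⟩ := List.mem_getLast?_eq_getLast (Option.mem_def.mpr hlmem)
          rw [heq]
          exact List.getLast_mem hnn
        refine ⟨p ++ [s], by simp, ?_, ?_, ?_, ?_⟩
        · rw [List.head?_append_of_ne_nil _ hne0]; exact hhead
        · rw [List.getLast?_concat]; simp [hdst]
        · apply List.isChain_append.mpr
          refine ⟨hchain, List.isChain_singleton s, ?_⟩
          intro x hx y hy
          rw [hlmem] at hx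
          simp only [Option.mem_def, Option.some.injEq] at hx
          simp only [List.head?_cons, Option.mem_def, Option.some.injEq] at hy
          subst hx; subst hy
          have hdeq : Q.stepDst slast = Q.stepSrc s := by rw [hldst, hsrc]
          exact ⟨hdeq, hne _ _ (hg _ hslastmem) hgood hnl hdeq⟩
        · intro s' hs'
          rcases List.mem_append.mp hs' with h' | h'
          · exact hg _ h'
          · simp only [List.mem_singleton] at h'; subst h'; exact hgood
  rcases main v' hreach with h | ⟨p, hne0, hhead, hlast, hchain, hg⟩
  · exact absurd h hvv'
  refine ⟨p, ⟨hne0, hhead, hlast, ?_, ?_⟩, ?_, ?_⟩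
  · exact hchain.imp fun a b h => h.1
  · exact hchain.imp fun a b h => h.2
  · intro a ha
    have := hg _ ha
    simpa [hGood] using this
  · intro a ha
    have := hg _ ha
    simpa [hGood] using this
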